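/- arXiv:2012.02476 — 2 statements merged into one kernel-verified Lean document; each statement's English description precedes it below -/
import Mathlib

section
/- Let S be a finite nonempty type, γ ∈ [0,1), R_max ≥ 0, r : S → ℝ with |r s| ≤ R_max for all s, μ : PMF S, and let P, P' : S → PMF S be two transition kernels. Then |J(μ, P) − J(μ, P')| ≤ (2·γ·R_max / (1−γ)²) · ∑_s ρ_{μ,P}(s) · TV(P s, P' s). -/
open scoped ENNReal

/-- The `t`-fold bind iterate of an initial distribution `μ` under transition kernel `P`:
`μ_0 = μ`, `μ_{t+1} = μ_t.bind P`. -/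
noncomputable def stepDist {S : Type*} (P : S → PMF S) (μ : PMF S) : ℕ → PMF S
  | 0 => μ
  | (t + 1) => (stepDist P μ t).bind P

/-- Discounted value `J(μ, P) = ∑'_t γ^t ∑_s μ_t^P(s) · r(s)`. -/
noncomputable def discValue {S : Type*} [Fintype S] (γ : ℝ) (r : S → ℝ)
    (μ : PMF S) (P : S → PMF S) : ℝ :=
  ∑' t : ℕ, γ ^ t * ∑ s, (stepDist P μ t s).toReal * r s

/-- Discounted visitation distribution `ρ_{μ,P}(s) = (1−γ) ∑'_t γ^t μ_t^P(s)`. -/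
noncomputable def visitDist {S : Type*} (γ : ℝ) (μ : PMF S) (P : S → PMF S) (s : S) : ℝ :=
  (1 - γ) * ∑' t : ℕ, γ ^ t * (stepDist P μ t s).toReal

/-- Total variation distance `TV(p, q) = (1/2) ∑_s |p s − q s|` on a finite type. -/
noncomputable def tvDist {S : Type*} [Fintype S] (p q : PMF S) : ℝ :=
  (1 / 2) * ∑ s, |(p s).toReal - (q s).toReal|

section aux

variable {S : Type*} [Fintype S]

lemma pmf_toReal_le_one (p : PMF S) (s : S) : (p s).toReal ≤ 1 := by
  simpa using ENNReal.toReal_mono (by simp) (p.coe_le_one s)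

lemma sum_pmf_toReal (p : PMF S) : ∑ s, (p s).toReal = 1 := by
  have h : ∑ s, p s = 1 := by rw [← tsum_fintype (L := .unconditional S)]; exact p.tsum_coe
  rw [← ENNReal.toReal_sum (fun a _ => p.apply_ne_top a), h, ENNReal.toReal_one]

lemma bind_apply_toReal (p : PMF S) (q : S → PMF S) (s : S) :
    ((p.bind q) s).toReal = ∑ a, (p a).toReal * (q a s).toReal := by
  rw [PMF.bind_apply, tsum_fintype,
    ENNReal.toReal_sum (fun a _ => ENNReal.mul_ne_top (p.apply_ne_top a) ((q a).apply_ne_top s))]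
  exact Finset.sum_congr rfl fun a _ => ENNReal.toReal_mul

end aux

set_option maxHeartbeats 1000000 in
/-- Visitation-weighted simulation lemma:
`|J(μ, P) − J(μ, P')| ≤ (2·γ·R_max / (1−γ)²) · ∑_s ρ_{μ,P}(s) · TV(P s, P' s)`. -/
theorem visitation_weighted_simulation_lemma {S : Type*} [Fintype S] [Nonempty S]
    (γ : ℝ) (hγ0 : 0 ≤ γ) (hγ1 : γ < 1)
    (Rmax : ℝ) (hR : 0 ≤ Rmax) (r : S → ℝ) (hr : ∀ s, |r s| ≤ Rmax)
    (μ : PMF S) (P P' : S → PMF S) :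
    |discValue γ r μ P - discValue γ r μ P'| ≤
      (2 * γ * Rmax / (1 - γ) ^ 2) * ∑ s, visitDist γ μ P s * tvDist (P s) (P' s) := by
  have h1γ : (0:ℝ) < 1 - γ := by linarith
  set Tv : S → ℝ := fun s => tvDist (P s) (P' s) with hTvdef
  set f : ℕ → S → ℝ := fun t s => (stepDist P μ t s).toReal with hfdef
  set g : ℕ → S → ℝ := fun t s => (stepDist P' μ t s).toReal with hgdef
  have hf0 : ∀ t s, 0 ≤ f t s := fun t s => ENNReal.toReal_nonneg
  have hg0 : ∀ t s, 0 ≤ g t s := fun t s => ENNReal.toReal_nonneg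
  have hf1 : ∀ t s, f t s ≤ 1 := fun t s => pmf_toReal_le_one _ s
  have hfsum : ∀ t, ∑ s, f t s = 1 := fun t => sum_pmf_toReal _
  have hgsum : ∀ t, ∑ s, g t s = 1 := fun t => sum_pmf_toReal _
  have hTv0 : ∀ s, 0 ≤ Tv s := by
    intro s
    show (0:ℝ) ≤ tvDist (P s) (P' s)
    simp only [tvDist]
    positivity
  have hTvsum : ∀ a, ∑ s, |(P a s).toReal - (P' a s).toReal| = 2 * Tv a := by
    intro a
    show _ = 2 * tvDist (P a) (P' a)
    simp only [tvDist]
    ring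
  set D : ℕ → ℝ := fun t => ∑ s, |f t s - g t s| with hDdef
  set E : ℕ → ℝ := fun t => ∑ s, f t s * (2 * Tv s) with hEdef
  have hD0 : D 0 = 0 := by simp [hDdef, hfdef, hgdef, stepDist]
  have hDnn : ∀ t, 0 ≤ D t := fun t => Finset.sum_nonneg fun s _ => abs_nonneg _
  have hEnn : ∀ t, 0 ≤ E t := fun t =>
    Finset.sum_nonneg fun s _ => mul_nonneg (hf0 t s) (by linarith [hTv0 s])
  have hD2 : ∀ t, D t ≤ 2 := by
    intro t
    calc ∑ s, |f t s - g t s| ≤ ∑ s, (f t s + g t s) :=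
          Finset.sum_le_sum fun s _ => (abs_sub _ _).trans
            (by rw [abs_of_nonneg (hf0 t s), abs_of_nonneg (hg0 t s)])
      _ = 2 := by rw [Finset.sum_add_distrib, hfsum, hgsum]; norm_num
  set C : ℝ := ∑ s, 2 * Tv s with hCdef
  have hEC : ∀ t, E t ≤ C := by
    intro t
    refine Finset.sum_le_sum fun s _ => ?_
    calc f t s * (2 * Tv s) ≤ 1 * (2 * Tv s) :=
          mul_le_mul_of_nonneg_right (hf1 t s) (by linarith [hTv0 s])
      _ = 2 * Tv s := one_mul _
  -- recursion step
  have hfrec : ∀ t s, f (t+1) s = ∑ a, f t a * (P a s).toReal := by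
    intro t s
    show ((stepDist P μ t).bind P s).toReal = _
    exact bind_apply_toReal (stepDist P μ t) P s
  have hgrec : ∀ t s, g (t+1) s = ∑ a, g t a * (P' a s).toReal := by
    intro t s
    show ((stepDist P' μ t).bind P' s).toReal = _
    exact bind_apply_toReal (stepDist P' μ t) P' s
  have hrec : ∀ t, D (t+1) ≤ D t + E t := by
    intro t
    have key : ∀ s, |f (t+1) s - g (t+1) s| ≤
        (∑ a, |f t a - g t a| * (P' a s).toReal) +
        (∑ a, f t a * |(P a s).toReal - (P' a s).toReal|) := by
      intro s
      have hid : f (t+1) s - g (t+1) s =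
          (∑ a, (f t a - g t a) * (P' a s).toReal) +
          (∑ a, f t a * ((P a s).toReal - (P' a s).toReal)) := by
        rw [hfrec, hgrec, ← Finset.sum_add_distrib, ← Finset.sum_sub_distrib]
        exact Finset.sum_congr rfl fun a _ => by ring
      rw [hid]
      refine (abs_add_le _ _).trans (add_le_add ?_ ?_)
      · refine (Finset.abs_sum_le_sum_abs _ _).trans (le_of_eq ?_)
        exact Finset.sum_congr rfl fun a _ => by
          rw [abs_mul, abs_of_nonneg (ENNReal.toReal_nonneg (a := P' a s))]
      · refine (Finset.abs_sum_le_sum_abs _ _).trans (le_of_eq ?_)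
        exact Finset.sum_congr rfl fun a _ => by
          rw [abs_mul, abs_of_nonneg (hf0 t a)]
    calc D (t+1) ≤ ∑ s, ((∑ a, |f t a - g t a| * (P' a s).toReal) +
          (∑ a, f t a * |(P a s).toReal - (P' a s).toReal|)) :=
          Finset.sum_le_sum fun s _ => key s
      _ = (∑ a, |f t a - g t a| * ∑ s, (P' a s).toReal) +
          (∑ a, f t a * ∑ s, |(P a s).toReal - (P' a s).toReal|) := by
          rw [Finset.sum_add_distrib]
          congr 1
          · rw [Finset.sum_comm]
            exact Finset.sum_congr rfl fun a _ => (Finset.mul_sum _ _ _).symm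
          · rw [Finset.sum_comm]
            exact Finset.sum_congr rfl fun a _ => (Finset.mul_sum _ _ _).symm
      _ = D t + E t := by
          congr 1
          · exact Finset.sum_congr rfl fun a _ => by rw [sum_pmf_toReal, mul_one]
          · exact Finset.sum_congr rfl fun a _ => by rw [hTvsum]
  -- summability
  have hgeo : Summable fun t : ℕ => γ ^ t := summable_geometric_of_lt_one hγ0 hγ1
  have hsumD : Summable fun t => γ ^ t * D t := by
    refine Summable.of_nonneg_of_le (fun t => mul_nonneg (pow_nonneg hγ0 t) (hDnn t))
      (fun t => ?_) (hgeo.mul_left 2)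
    calc γ ^ t * D t ≤ γ ^ t * 2 :=
          mul_le_mul_of_nonneg_left (hD2 t) (pow_nonneg hγ0 t)
      _ = 2 * γ ^ t := mul_comm _ _
  have hsumE : Summable fun t => γ ^ t * E t := by
    refine Summable.of_nonneg_of_le (fun t => mul_nonneg (pow_nonneg hγ0 t) (hEnn t))
      (fun t => ?_) (hgeo.mul_left C)
    calc γ ^ t * E t ≤ γ ^ t * C :=
          mul_le_mul_of_nonneg_left (hEC t) (pow_nonneg hγ0 t)
      _ = C * γ ^ t := mul_comm _ _
  set A : ℝ := ∑' t, γ ^ t * D t with hAdef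
  set B : ℝ := ∑' t, γ ^ t * E t with hBdef
  have hBnn : 0 ≤ B := tsum_nonneg fun t => mul_nonneg (pow_nonneg hγ0 t) (hEnn t)
  have hA_le : A ≤ γ * B / (1 - γ) := by
    have hshift : Summable fun t => γ ^ (t+1) * D (t+1) :=
      (summable_nat_add_iff (f := fun t => γ ^ t * D t) 1).mpr hsumD
    have h1 : A = ∑' t, γ ^ (t+1) * D (t+1) := by
      rw [hAdef, Summable.tsum_eq_zero_add hsumD, hD0]; simp
    have heq : (fun t => γ ^ (t+1) * (D t + E t)) =
        fun t => γ * (γ ^ t * D t) + γ * (γ ^ t * E t) := by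
      funext t; ring
    have hsum2 : Summable fun t => γ ^ (t+1) * (D t + E t) := by
      rw [heq]; exact (hsumD.mul_left γ).add (hsumE.mul_left γ)
    have h2 : ∑' t, γ ^ (t+1) * D (t+1) ≤ ∑' t, γ ^ (t+1) * (D t + E t) :=
      Summable.tsum_le_tsum (fun t => mul_le_mul_of_nonneg_left (hrec t) (pow_nonneg hγ0 _))
        hshift hsum2
    have h3 : ∑' t, γ ^ (t+1) * (D t + E t) = γ * A + γ * B := by
      rw [heq, Summable.tsum_add (hsumD.mul_left γ) (hsumE.mul_left γ), tsum_mul_left, tsum_mul_left]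
    have hAγ : A ≤ γ * A + γ * B := by
      calc A = ∑' t, γ ^ (t+1) * D (t+1) := h1
        _ ≤ ∑' t, γ ^ (t+1) * (D t + E t) := h2
        _ = γ * A + γ * B := h3
    rw [le_div_iff₀ h1γ]
    nlinarith
  -- bound on the value difference
  have hrabs : ∀ t, |∑ s, (f t s - g t s) * r s| ≤ Rmax * D t := by
    intro t
    refine (Finset.abs_sum_le_sum_abs _ _).trans ?_
    calc ∑ s, |(f t s - g t s) * r s| ≤ ∑ s, |f t s - g t s| * Rmax := by
          refine Finset.sum_le_sum fun s _ => ?_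
          rw [abs_mul]
          exact mul_le_mul_of_nonneg_left (hr s) (abs_nonneg _)
      _ = Rmax * D t := by rw [← Finset.sum_mul]; ring
  have habs : ∀ (h : ℕ → S → ℝ), (∀ t, ∑ s, h t s = 1) → (∀ t s, 0 ≤ h t s) →
      ∀ t, |∑ s, h t s * r s| ≤ Rmax := by
    intro h hs hn t
    refine (Finset.abs_sum_le_sum_abs _ _).trans ?_
    calc ∑ s, |h t s * r s| ≤ ∑ s, h t s * Rmax := by
          refine Finset.sum_le_sum fun s _ => ?_
          rw [abs_mul, abs_of_nonneg (hn t s)]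
          exact mul_le_mul_of_nonneg_left (hr s) (hn t s)
      _ = Rmax := by rw [← Finset.sum_mul, hs, one_mul]
  have hsummJ : ∀ (h : ℕ → S → ℝ), (∀ t, ∑ s, h t s = 1) → (∀ t s, 0 ≤ h t s) →
      Summable fun t => γ ^ t * ∑ s, h t s * r s := by
    intro h hs hn
    apply Summable.of_abs
    refine Summable.of_nonneg_of_le (fun t => abs_nonneg _) (fun t => ?_) (hgeo.mul_left Rmax)
    rw [abs_mul, abs_pow, abs_of_nonneg hγ0]
    calc γ ^ t * |∑ s, h t s * r s| ≤ γ ^ t * Rmax :=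
          mul_le_mul_of_nonneg_left (habs h hs hn t) (pow_nonneg hγ0 t)
      _ = Rmax * γ ^ t := mul_comm _ _
  have hsa : Summable fun t => γ ^ t * ∑ s, f t s * r s := hsummJ f hfsum hf0
  have hsb : Summable fun t => γ ^ t * ∑ s, g t s * r s := hsummJ g hgsum hg0
  have hcbound : ∀ t, |γ ^ t * ∑ s, f t s * r s - γ ^ t * ∑ s, g t s * r s| ≤
      Rmax * (γ ^ t * D t) := by
    intro t
    have hc : γ ^ t * ∑ s, f t s * r s - γ ^ t * ∑ s, g t s * r s =
        γ ^ t * ∑ s, (f t s - g t s) * r s := by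
      rw [← mul_sub, ← Finset.sum_sub_distrib]
      congr 1
      exact Finset.sum_congr rfl fun s _ => by ring
    rw [hc, abs_mul, abs_pow, abs_of_nonneg hγ0]
    calc γ ^ t * |∑ s, (f t s - g t s) * r s| ≤ γ ^ t * (Rmax * D t) :=
          mul_le_mul_of_nonneg_left (hrabs t) (pow_nonneg hγ0 t)
      _ = Rmax * (γ ^ t * D t) := by ring
  have hsumabs : Summable fun t => |γ ^ t * ∑ s, f t s * r s - γ ^ t * ∑ s, g t s * r s| :=
    Summable.of_nonneg_of_le (fun t => abs_nonneg _) hcbound (hsumD.mul_left Rmax)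
  have hJ : |discValue γ r μ P - discValue γ r μ P'| ≤ Rmax * A := by
    have hJP : discValue γ r μ P = ∑' t, γ ^ t * ∑ s, f t s * r s := rfl
    have hJP' : discValue γ r μ P' = ∑' t, γ ^ t * ∑ s, g t s * r s := rfl
    rw [hJP, hJP', ← Summable.tsum_sub hsa hsb]
    calc |∑' t, (γ ^ t * ∑ s, f t s * r s - γ ^ t * ∑ s, g t s * r s)|
        ≤ ∑' t, |γ ^ t * ∑ s, f t s * r s - γ ^ t * ∑ s, g t s * r s| := by
          simpa [Real.norm_eq_abs] using
            norm_tsum_le_tsum_norm (f := fun t =>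
              γ ^ t * ∑ s, f t s * r s - γ ^ t * ∑ s, g t s * r s)
              (by simpa [Real.norm_eq_abs] using hsumabs)
      _ ≤ ∑' t, Rmax * (γ ^ t * D t) :=
          Summable.tsum_le_tsum hcbound hsumabs (hsumD.mul_left Rmax)
      _ = Rmax * A := tsum_mul_left
  -- rewrite the right-hand side
  have hsum_s : ∀ s : S, Summable fun t => γ ^ t * f t s * Tv s := by
    intro s
    refine Summable.of_nonneg_of_le
      (fun t => mul_nonneg (mul_nonneg (pow_nonneg hγ0 t) (hf0 t s)) (hTv0 s))
      (fun t => ?_) (hgeo.mul_left (Tv s))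
    calc γ ^ t * f t s * Tv s ≤ γ ^ t * 1 * Tv s :=
          mul_le_mul_of_nonneg_right
            (mul_le_mul_of_nonneg_left (hf1 t s) (pow_nonneg hγ0 t)) (hTv0 s)
      _ = Tv s * γ ^ t := by ring
  have hRHS : ∑ s, visitDist γ μ P s * tvDist (P s) (P' s) = (1 - γ) * (B / 2) := by
    have step1 : ∑ s, visitDist γ μ P s * tvDist (P s) (P' s) =
        ∑ s, (1 - γ) * ∑' t, γ ^ t * f t s * Tv s := by
      refine Finset.sum_congr rfl fun s _ => ?_
      have hvd : visitDist γ μ P s = (1 - γ) * ∑' t, γ ^ t * f t s := rfl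
      have hTvs : tvDist (P s) (P' s) = Tv s := rfl
      rw [hvd, hTvs, mul_assoc, ← tsum_mul_right]
    rw [step1, ← Finset.mul_sum, ← Summable.tsum_finsetSum (fun s _ => hsum_s s)]
    congr 1
    have hterm : ∀ t, ∑ s, γ ^ t * f t s * Tv s = (1 / 2) * (γ ^ t * E t) := by
      intro t
      have : γ ^ t * E t = 2 * ∑ s, γ ^ t * f t s * Tv s := by
        show γ ^ t * ∑ s, f t s * (2 * Tv s) = _
        rw [Finset.mul_sum, Finset.mul_sum]
        exact Finset.sum_congr rfl fun s _ => by ring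
      linarith
    rw [tsum_congr hterm, tsum_mul_left]
    rw [hBdef]
    ring
  rw [hRHS]
  have hfinal : 2 * γ * Rmax / (1 - γ) ^ 2 * ((1 - γ) * (B / 2)) =
      Rmax * (γ * B / (1 - γ)) := by
    field_simp
  rw [hfinal]
  exact hJ.trans (mul_le_mul_of_nonneg_left hA_le hR)
end

section
/- Let S be a finite nonempty type, μ : PMF S, and let P, P' : S → PMF S be two transition kernels such that TV(P s, P' s) ≤ α for every s ∈ S. Then for every natural number t, the t-step state distributions satisfy TV(μ_t^P, μ_t^{P'}) ≤ t·α. -/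
open scoped ENNReal

lemma pmf_sum_toReal {S : Type*} [Fintype S] (p : PMF S) : ∑ s, (p s).toReal = 1 := by
  rw [← ENNReal.toReal_sum (fun a _ => p.apply_ne_top a), ← tsum_fintype (L := .unconditional _), p.tsum_coe]
  simp

lemma pmf_bind_toReal {S : Type*} [Fintype S] (ν : PMF S) (P : S → PMF S) (s : S) :
    ((ν.bind P) s).toReal = ∑ a, (ν a).toReal * ((P a) s).toReal := by
  rw [PMF.bind_apply, tsum_fintype,
    ENNReal.toReal_sum (fun a _ => ENNReal.mul_ne_top (ν.apply_ne_top a) ((P a).apply_ne_top s))]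
  simp [ENNReal.toReal_mul]

/-- Error-accumulation lemma: if the two kernels are `α`-close in total variation at every
state, then the `t`-step state distributions are `t·α`-close in total variation. -/
theorem tv_error_accumulation {S : Type*} [Fintype S] [Nonempty S]
    (μ : PMF S) (P P' : S → PMF S) (α : ℝ)
    (hTV : ∀ s, tvDist (P s) (P' s) ≤ α) (t : ℕ) :
    tvDist (stepDist P μ t) (stepDist P' μ t) ≤ t * α := by
  induction t with
  | zero => simp [tvDist, stepDist]
  | succ t ih =>
    have hα : 0 ≤ α :=
      le_trans (by unfold tvDist; positivity) (hTV (Classical.arbitrary S))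
    set ν := stepDist P μ t with hν
    set ν' := stepDist P' μ t with hν'
    have key : ∀ s, |((ν.bind P) s).toReal - ((ν'.bind P') s).toReal| ≤
        ∑ a, ((ν a).toReal * |((P a) s).toReal - ((P' a) s).toReal|
          + |(ν a).toReal - (ν' a).toReal| * ((P' a) s).toReal) := by
      intro s
      rw [pmf_bind_toReal, pmf_bind_toReal, ← Finset.sum_sub_distrib]
      refine (Finset.abs_sum_le_sum_abs _ _).trans (Finset.sum_le_sum fun a _ => ?_)
      have h1 : (ν a).toReal * ((P a) s).toReal - (ν' a).toReal * ((P' a) s).toReal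
          = (ν a).toReal * (((P a) s).toReal - ((P' a) s).toReal)
            + ((ν a).toReal - (ν' a).toReal) * ((P' a) s).toReal := by ring
      rw [h1]
      refine (abs_add_le _ _).trans ?_
      rw [abs_mul, abs_mul, abs_of_nonneg (ENNReal.toReal_nonneg : (0:ℝ) ≤ (ν a).toReal),
        abs_of_nonneg (ENNReal.toReal_nonneg : (0:ℝ) ≤ ((P' a) s).toReal)]
    have hstep : tvDist (ν.bind P) (ν'.bind P') ≤ α + tvDist ν ν' := by
      unfold tvDist
      have h2 : ∑ s, |((ν.bind P) s).toReal - ((ν'.bind P') s).toReal| ≤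
          ∑ a, (ν a).toReal * (∑ s, |((P a) s).toReal - ((P' a) s).toReal|)
            + ∑ a, |(ν a).toReal - (ν' a).toReal| := by
        refine (Finset.sum_le_sum fun s _ => key s).trans ?_
        rw [Finset.sum_comm]
        rw [← Finset.sum_add_distrib]
        refine Finset.sum_le_sum fun a _ => ?_
        rw [Finset.sum_add_distrib, ← Finset.mul_sum, ← Finset.mul_sum, pmf_sum_toReal, mul_one]
      have h3 : ∀ a, ∑ s, |((P a) s).toReal - ((P' a) s).toReal| ≤ 2 * α := by
        intro a
        have := hTV a
        unfold tvDist at this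
        linarith
      have h4 : ∑ a, (ν a).toReal * (∑ s, |((P a) s).toReal - ((P' a) s).toReal|)
          ≤ 2 * α := by
        calc ∑ a, (ν a).toReal * (∑ s, |((P a) s).toReal - ((P' a) s).toReal|)
            ≤ ∑ a, (ν a).toReal * (2 * α) :=
              Finset.sum_le_sum fun a _ => mul_le_mul_of_nonneg_left (h3 a) ENNReal.toReal_nonneg
          _ = 2 * α := by rw [← Finset.sum_mul, pmf_sum_toReal, one_mul]
      calc (1/2) * ∑ s, |((ν.bind P) s).toReal - ((ν'.bind P') s).toReal|
          ≤ (1/2) * (2 * α + ∑ a, |(ν a).toReal - (ν' a).toReal|) := by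
            have hnn : (0:ℝ) ≤ ∑ s, |((ν.bind P) s).toReal - ((ν'.bind P') s).toReal| :=
              Finset.sum_nonneg fun s _ => abs_nonneg _
            linarith
        _ = α + (1/2) * ∑ a, |(ν a).toReal - (ν' a).toReal| := by ring
    calc tvDist (stepDist P μ (t+1)) (stepDist P' μ (t+1)) ≤ α + tvDist ν ν' := hstep
      _ ≤ α + t * α := by linarith
      _ = (t + 1 : ℕ) * α := by push_cast; ring
end
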